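/- Let k ≥ 1 be an integer, let m ∈ [0,1], let V ≥ 0, and let a₀, a₁, …, a_k be real numbers with a₀ ≥ 0 and, for every integer 1 ≤ i ≤ k, aᵢ ≥ (1 − 1/k)·a_{i−1} + (m + (1 − m)(1 − 1/k)^{i−1})·V/k. Then for every integer 0 ≤ i ≤ k, aᵢ ≥ [m·(1 − (1 − 1/k)^i) + (1 − m)·(i/k)·(1 − 1/k)^{i−1}]·V; in particular, a_k ≥ [m·(1 − 1/e) + (1 − m)·(1/e)]·V. -/

import Mathlib

/-- the Random Greedy recursion. If `a₀ ≥ 0` and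
`aᵢ ≥ (1 − 1/k)·a_{i−1} + (m + (1−m)(1−1/k)^{i−1})·V/k` for `1 ≤ i ≤ k`, then
`aᵢ ≥ [m(1 − (1−1/k)^i) + (1−m)(i/k)(1−1/k)^{i−1}]·V` for all `0 ≤ i ≤ k`, and in
particular `a_k ≥ [m(1 − 1/e) + (1−m)/e]·V`. -/
theorem stmt7 (k : ℕ) (hk : 1 ≤ k)
    (m V : ℝ) (hm : m ∈ Set.Icc (0 : ℝ) 1) (hV : 0 ≤ V)
    (a : ℕ → ℝ) (ha0 : 0 ≤ a 0)
    (hrec : ∀ i : ℕ, 1 ≤ i → i ≤ k →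
      (1 - 1 / (k : ℝ)) * a (i - 1)
        + (m + (1 - m) * (1 - 1 / (k : ℝ)) ^ (i - 1)) * V / (k : ℝ) ≤ a i) :
    (∀ i : ℕ, i ≤ k →
      (m * (1 - (1 - 1 / (k : ℝ)) ^ i)
        + (1 - m) * ((i : ℝ) / (k : ℝ)) * (1 - 1 / (k : ℝ)) ^ (i - 1)) * V ≤ a i) ∧
    (m * (1 - 1 / Real.exp 1) + (1 - m) * (1 / Real.exp 1)) * V ≤ a k := by
  obtain ⟨hm0, hm1⟩ := hm
  have hkpos : (0 : ℝ) < (k : ℝ) := by exact_mod_cast hk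
  have hk1 : (1 : ℝ) ≤ (k : ℝ) := by exact_mod_cast hk
  set q : ℝ := 1 - 1 / (k : ℝ) with hq
  have hq0 : 0 ≤ q := by
    have h : 1 / (k : ℝ) ≤ 1 := by
      rw [div_le_one hkpos]; exact hk1
    rw [hq]; linarith
  have hq1 : q ≤ 1 := by
    have : (0 : ℝ) ≤ 1 / (k : ℝ) := by positivity
    simp only [hq]; linarith
  -- main induction
  have main : ∀ i : ℕ, i ≤ k →
      (m * (1 - q ^ i) + (1 - m) * ((i : ℝ) / (k : ℝ)) * q ^ (i - 1)) * V ≤ a i := by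
    intro i
    induction i with
    | zero => intro _; simpa using ha0
    | succ n ih =>
      intro hnk
      have hn : n ≤ k := Nat.le_of_succ_le hnk
      have ihn := ih hn
      have hr := hrec (n + 1) (Nat.succ_le_succ (Nat.zero_le n)) hnk
      simp only [Nat.add_sub_cancel] at hr
      have hqn : q * ((n : ℝ) * q ^ (n - 1)) = (n : ℝ) * q ^ n := by
        cases n with
        | zero => simp
        | succ p =>
          simp only [Nat.add_sub_cancel]
          ring
      have key : (m * (1 - q ^ (n + 1)) + (1 - m) * (((n : ℝ) + 1) / (k : ℝ)) * q ^ n) * V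
          = q * ((m * (1 - q ^ n) + (1 - m) * ((n : ℝ) / (k : ℝ)) * q ^ (n - 1)) * V)
            + (m + (1 - m) * q ^ n) * V / (k : ℝ) := by
        have h1 : q * ((m * (1 - q ^ n) + (1 - m) * ((n : ℝ) / (k : ℝ)) * q ^ (n - 1)) * V)
            = (m * (q - q * q ^ n) + (1 - m) / (k : ℝ) * ((n : ℝ) * q ^ n)) * V := by
          rw [← hqn]; ring
        rw [h1, hq]
        have hkne : (k : ℝ) ≠ 0 := ne_of_gt hkpos
        ring
      rw [show n + 1 - 1 = n from rfl]
      push_cast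
      rw [key]
      exact le_trans (add_le_add_left (mul_le_mul_of_nonneg_left ihn hq0) _) hr
  refine ⟨main, ?_⟩
  have hak := main k le_rfl
  have hkk : ((k : ℝ) / (k : ℝ)) = 1 := div_self (ne_of_gt hkpos)
  rw [hkk] at hak
  -- (1 - 1/k)^k ≤ 1/e
  have hub : q ^ k ≤ 1 / Real.exp 1 := by
    have h1 : q ≤ Real.exp (-(1 / (k : ℝ))) := by
      have := Real.add_one_le_exp (-(1 / (k : ℝ)))
      linarith
    calc q ^ k ≤ (Real.exp (-(1 / (k : ℝ)))) ^ k := pow_le_pow_left₀ hq0 h1 k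
      _ = Real.exp (-(1 / (k : ℝ)) * k) := by rw [← Real.exp_nat_mul]; ring_nf
      _ = Real.exp (-1) := by
          congr 1
          field_simp
      _ = 1 / Real.exp 1 := by rw [Real.exp_neg]; rw [one_div]
  -- 1/e ≤ (1 - 1/k)^(k-1)
  have hlb : 1 / Real.exp 1 ≤ q ^ (k - 1) := by
    rcases Nat.lt_or_ge k 2 with h2 | h2
    · interval_cases k
      simp
      exact inv_le_one_of_one_le₀ (Real.one_le_exp (by norm_num))
    · have hk1' : (1 : ℝ) ≤ (k : ℝ) - 1 := by
        have : (2 : ℝ) ≤ (k : ℝ) := by exact_mod_cast h2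
        linarith
      have hkm1pos : (0 : ℝ) < (k : ℝ) - 1 := by linarith
      have hqpos : 0 < q := by
        simp only [hq]
        have : 1 / (k : ℝ) < 1 := by
          rw [div_lt_one hkpos]
          have : (2 : ℝ) ≤ (k : ℝ) := by exact_mod_cast h2
          linarith
        linarith
      have hinv : q⁻¹ = 1 + 1 / ((k : ℝ) - 1) := by
        rw [hq]
        field_simp
        ring
      have h3 : q⁻¹ ≤ Real.exp (1 / ((k : ℝ) - 1)) := by
        rw [hinv]
        have := Real.add_one_le_exp (1 / ((k : ℝ) - 1))
        linarith
      have h4 : (q⁻¹) ^ (k - 1) ≤ Real.exp 1 := by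
        calc (q⁻¹) ^ (k - 1) ≤ (Real.exp (1 / ((k : ℝ) - 1))) ^ (k - 1) :=
              pow_le_pow_left₀ (by positivity) h3 _
          _ = Real.exp (1 / ((k : ℝ) - 1) * (k - 1 : ℕ)) := by rw [← Real.exp_nat_mul]; ring_nf
          _ = Real.exp 1 := by
              congr 1
              have hcast : ((k - 1 : ℕ) : ℝ) = (k : ℝ) - 1 := by
                push_cast [Nat.cast_sub hk]
                ring
              rw [hcast]
              field_simp
      have hqpowpos : 0 < q ^ (k - 1) := pow_pos hqpos _
      rw [div_le_iff₀ (Real.exp_pos 1)]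
      have h5 : q ^ (k - 1) * q⁻¹ ^ (k - 1) = 1 := by
        rw [← mul_pow, mul_inv_cancel₀ (ne_of_gt hqpos), one_pow]
      calc (1 : ℝ) = q ^ (k - 1) * q⁻¹ ^ (k - 1) := h5.symm
        _ ≤ q ^ (k - 1) * Real.exp 1 := mul_le_mul_of_nonneg_left h4 (le_of_lt hqpowpos)
  -- combine
  refine le_trans ?_ hak
  apply mul_le_mul_of_nonneg_right _ hV
  have h1m : 0 ≤ 1 - m := by linarith
  nlinarith [mul_le_mul_of_nonneg_left hub hm0, mul_le_mul_of_nonneg_left hlb h1m]
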